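/- Let μ : ℝ → ℝ be locally absolutely continuous on (-∞, t₀), positive there, and satisfy μ'(t) ≤ -H(μ(t))/(c·μ(t)) for almost every t < t₀, where H : (0, ∞) → (0, ∞) is C¹ and c > 0. Let t₂ < t₀ and let g solve the backward Cauchy problem g(t₂) = μ(t₂), g'(t) = -H(g(t))/(c·g(t)). Then g exists on all of (-∞, t₂] and g(t) ≤ μ(t) for all t ≤ t₂. -/

import Mathlib

open Set MeasureTheory intervalIntegral Filter Topology

lemma gronwall_aux (L t' t₂ : ℝ) (hL : 0 ≤ L) (ht : t' ≤ t₂) (h : ℝ → ℝ)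
    (hcont : ContinuousOn h (Icc t' t₂)) (hh2 : h t₂ ≤ 0)
    (key : ∀ s u, t' ≤ s → s ≤ u → u ≤ t₂ → (∀ τ ∈ Icc s u, 0 ≤ h τ) → h u ≤ 0 →
      h s ≤ ∫ τ in s..u, L * h τ) :
    ∀ t ∈ Icc t' t₂, h t ≤ 0 := by
  set δ : ℝ := 1 / (2 * (L + 1)) with hδdef
  have hδpos : 0 < δ := by positivity
  have hLδ : L * δ ≤ 1 / 2 := by
    rw [hδdef, mul_one_div, div_le_div_iff₀ (by positivity) (by norm_num)]
    nlinarith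
  -- one backward step of length δ
  have step : ∀ t ∈ Icc t' t₂, (∀ s ∈ Icc t t₂, h s ≤ 0) →
      ∀ s ∈ Icc (max t' (t - δ)) t₂, h s ≤ 0 := by
    intro t htmem hA
    set r := max t' (t - δ) with hrdef
    have hrt' : t' ≤ r := le_max_left _ _
    have hrt : r ≤ t := max_le htmem.1 (by linarith)
    -- it suffices to handle s ∈ [r, t]
    suffices hmain : ∀ s ∈ Icc r t, h s ≤ 0 by
      intro s hs
      rcases le_or_gt s t with hst | hst
      · exact hmain s ⟨hs.1, hst⟩
      · exact hA s ⟨hst.le, hs.2⟩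
    by_contra hex
    push_neg at hex
    obtain ⟨s₁, hs₁, hs₁pos⟩ := hex
    have hsubIcc : Icc r t ⊆ Icc t' t₂ := Icc_subset_Icc hrt' (htmem.2)
    have hcont' : ContinuousOn h (Icc r t) := hcont.mono hsubIcc
    obtain ⟨s₀, hs₀mem, hs₀max⟩ :=
      isCompact_Icc.exists_isMaxOn ⟨s₁, hs₁⟩ hcont'
    set M := h s₀ with hM
    have hMpos : 0 < M := lt_of_lt_of_le hs₁pos (hs₀max hs₁)
    -- crossing point
    set C := {s ∈ Icc s₀ t | h s ≤ 0} with hC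
    have htC : t ∈ C := ⟨⟨hs₀mem.2, le_refl t⟩, hA t ⟨le_refl t, htmem.2⟩⟩
    have hCne : C.Nonempty := ⟨t, htC⟩
    have hCbdd : BddBelow C := ⟨s₀, fun x hx => hx.1.1⟩
    have hCclosed : IsClosed C := by
      have : ContinuousOn h (Icc s₀ t) := hcont'.mono (Icc_subset_Icc hs₀mem.1 le_rfl)
      exact this.preimage_isClosed_of_isClosed isClosed_Icc isClosed_Iic
    set u₀ := sInf C with hu₀
    have hu₀C : u₀ ∈ C := hCclosed.csInf_mem hCne hCbdd
    have hu₀mem : u₀ ∈ Icc s₀ t := hu₀C.1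
    have hu₀le : h u₀ ≤ 0 := hu₀C.2
    have hpos_before : ∀ τ ∈ Ico s₀ u₀, 0 < h τ := by
      intro τ hτ
      by_contra hle
      push_neg at hle
      have : τ ∈ C := ⟨⟨hτ.1, (lt_of_lt_of_le hτ.2 hu₀mem.2).le⟩, hle⟩
      exact absurd (csInf_le hCbdd this) (not_le.mpr hτ.2)
    have hs₀u₀ : s₀ < u₀ := by
      rcases lt_or_eq_of_le hu₀mem.1 with h1 | h1
      · exact h1
      · exfalso
        rw [← h1] at hu₀le
        exact absurd hu₀le (not_le.mpr hMpos)
    have hnonneg : ∀ τ ∈ Icc s₀ u₀, 0 ≤ h τ := by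
      intro τ hτ
      rcases lt_or_eq_of_le hτ.2 with h1 | h1
      · exact (hpos_before τ ⟨hτ.1, h1⟩).le
      · -- τ = u₀ : limit of positive values
        subst h1
        have hcu : ContinuousWithinAt h (Ico s₀ u₀) u₀ :=
          (hcont u₀ (hsubIcc ⟨le_trans hs₀mem.1 hu₀mem.1, hu₀mem.2⟩)).mono
            (fun x hx => hsubIcc ⟨le_trans hs₀mem.1 hx.1, le_trans hx.2.le hu₀mem.2⟩)
        have hne : (𝓝[Ico s₀ u₀] u₀).NeBot := by
          have : u₀ ∈ closure (Ico s₀ u₀) := by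
            rw [closure_Ico (ne_of_lt hs₀u₀)]
            exact ⟨hs₀u₀.le, le_refl _⟩
          exact mem_closure_iff_nhdsWithin_neBot.mp this
        exact ge_of_tendsto hcu (eventually_nhdsWithin_of_forall
          (fun x hx => (hpos_before x hx).le))
    -- apply key on [s₀, u₀]
    have hkey := key s₀ u₀ (hsubIcc hs₀mem).1 hs₀u₀.le
      (le_trans hu₀mem.2 htmem.2) hnonneg hu₀le
    have hIcc_sub : Icc s₀ u₀ ⊆ Icc r t := Icc_subset_Icc hs₀mem.1 hu₀mem.2
    have hhint : IntervalIntegrable (fun τ => L * h τ) volume s₀ u₀ := by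
      apply ContinuousOn.intervalIntegrable
      rw [uIcc_of_le hs₀u₀.le]
      exact continuousOn_const.mul (hcont'.mono hIcc_sub)
    have hbound : (∫ τ in s₀..u₀, L * h τ) ≤ L * M * (u₀ - s₀) := by
      have := intervalIntegral.integral_mono_on hs₀u₀.le hhint
        (intervalIntegrable_const (c := L * M))
        (fun x hx => mul_le_mul_of_nonneg_left (hs₀max (hIcc_sub hx)) hL)
      simpa [smul_eq_mul, mul_comm, mul_left_comm, mul_assoc] using this
    have hlen : u₀ - s₀ ≤ δ := by
      have : t - δ ≤ r := le_max_right _ _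
      have h1 : t - δ ≤ s₀ := le_trans this hs₀mem.1
      have h2 : u₀ ≤ t := hu₀mem.2
      linarith
    have : M ≤ M / 2 := by
      calc M = h s₀ := rfl
        _ ≤ L * M * (u₀ - s₀) := le_trans hkey hbound
        _ ≤ L * M * δ := by
            apply mul_le_mul_of_nonneg_left hlen (by positivity)
        _ = (L * δ) * M := by ring
        _ ≤ (1/2) * M := mul_le_mul_of_nonneg_right hLδ hMpos.le
        _ = M / 2 := by ring
    linarith
  -- continuous induction
  set A := {t | t ∈ Icc t' t₂ ∧ ∀ s ∈ Icc t t₂, h s ≤ 0} with hA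
  have ht₂A : t₂ ∈ A := ⟨⟨ht, le_refl _⟩, fun s hs => le_antisymm hs.2 hs.1 ▸ hh2⟩
  have hAne : A.Nonempty := ⟨t₂, ht₂A⟩
  have hAbdd : BddBelow A := ⟨t', fun x hx => hx.1.1⟩
  set β := sInf A with hβ
  have hβle : t' ≤ β := le_csInf hAne (fun x hx => hx.1.1)
  have hβub : β ≤ t₂ := csInf_le hAbdd ht₂A
  have hIoc : ∀ s, β < s → s ≤ t₂ → h s ≤ 0 := by
    intro s hβs hst₂
    obtain ⟨a, haA, has⟩ := exists_lt_of_csInf_lt hAne hβs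
    exact haA.2 s ⟨has.le, hst₂⟩
  have hβA : β ∈ A := by
    refine ⟨⟨hβle, hβub⟩, ?_⟩
    intro s hs
    rcases eq_or_lt_of_le hs.1 with heq | hlt
    · rw [← heq]
      rcases eq_or_lt_of_le hβub with heq2 | hβlt
      · rw [heq2]; exact hh2
      · have hcu : ContinuousWithinAt h (Ioc β t₂) β := by
          refine (hcont β ⟨hβle, hβub⟩).mono ?_
          exact fun x hx => ⟨le_trans hβle hx.1.le, hx.2⟩
        have hne : (𝓝[Ioc β t₂] β).NeBot := by
          have : β ∈ closure (Ioc β t₂) := by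
            rw [closure_Ioc (ne_of_lt hβlt)]
            exact ⟨le_refl _, hβub⟩
          exact mem_closure_iff_nhdsWithin_neBot.mp this
        exact le_of_tendsto hcu
          (eventually_nhdsWithin_of_forall (fun x hx => hIoc x hx.1 hx.2))
    · exact hIoc s hlt hs.2
  rcases eq_or_lt_of_le hβle with heq | hlt
  · exact fun t htm => hβA.2 t (heq ▸ htm)
  · exfalso
    have hst := step β ⟨hβle, hβub⟩ hβA.2
    have hmaxA : max t' (β - δ) ∈ A := by
      refine ⟨⟨le_max_left _ _, max_le ht (by linarith)⟩, ?_⟩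
      exact fun s hs => hst s hs
    have h1 : β ≤ max t' (β - δ) := csInf_le hAbdd hmaxA
    have h2 : max t' (β - δ) < β := max_lt hlt (by linarith)
    linarith

/-- Comparison principle. -/
theorem backward_comparison
    (H : ℝ → ℝ) (hH : ContDiffOn ℝ 1 H (Ioi 0)) (hHpos : ∀ x > 0, 0 < H x)
    (c : ℝ) (hc : 0 < c) (t₀ t₂ : ℝ) (ht₂ : t₂ < t₀)
    (μ μ' : ℝ → ℝ)
    (hμpos : ∀ t < t₀, 0 < μ t)
    (hμac : ∀ s t : ℝ, s ≤ t → t < t₀ → μ t - μ s = ∫ τ in s..t, μ' τ)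
    (hμderiv : ∀ᵐ t : ℝ, t < t₀ → HasDerivAt μ (μ' t) t ∧ μ' t ≤ -H (μ t) / (c * μ t)) :
    ∃ g : ℝ → ℝ, g t₂ = μ t₂ ∧
      ∀ t ≤ t₂, HasDerivAt g (-H (g t) / (c * g t)) t ∧ g t ≤ μ t := by
  have hμanti : ∀ s t : ℝ, s ≤ t → t < t₀ → μ t ≤ μ s := by
    intro s t hst hlt
    have h1 : μ t - μ s = ∫ τ in s..t, μ' τ := hμac s t hst hlt
    have h2 : (∫ τ in s..t, μ' τ) ≤ 0 := by
      by_cases hint : IntervalIntegrable μ' volume s t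
      · have hae : ∀ᵐ τ ∂(volume.restrict (Icc s t)), μ' τ ≤ 0 := by
          have h3 : ∀ᵐ τ : ℝ, τ ∈ Icc s t → μ' τ ≤ 0 := by
            filter_upwards [hμderiv] with τ hτ hmem
            have hτt₀ : τ < t₀ := lt_of_le_of_lt hmem.2 hlt
            have := (hτ hτt₀).2
            have hpos := hμpos τ hτt₀
            have hHp := hHpos _ hpos
            have h4 : -H (μ τ) / (c * μ τ) < 0 := by
              rw [neg_div]
              exact neg_lt_zero.mpr (div_pos hHp (mul_pos hc hpos))
            linarith
          exact (ae_restrict_iff' measurableSet_Icc).2 h3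
        have := intervalIntegral.integral_mono_ae_restrict hst hint
          (intervalIntegrable_const (c := (0:ℝ))) hae
        simpa using this
      · rw [intervalIntegral.integral_undef hint]
    linarith
  have hμint : ∀ s t : ℝ, s ≤ t → t < t₀ → IntervalIntegrable μ' volume s t := by
    intro s t hst hlt
    rcases eq_or_lt_of_le hst with rfl | hslt
    · exact IntervalIntegrable.refl
    by_contra hint
    have hzero : μ t = μ s := by
      have := hμac s t hst hlt
      rw [intervalIntegral.integral_undef hint] at this
      linarith
    have hconst : ∀ τ ∈ Icc s t, μ τ = μ s := by
      intro τ hτ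
      have h1 : μ τ ≤ μ s := hμanti s τ hτ.1 (lt_of_le_of_lt hτ.2 hlt)
      have h2 : μ t ≤ μ τ := hμanti τ t hτ.2 hlt
      rw [hzero] at h2
      linarith
    have hne : ¬ (volume (Ioo s t) = 0) := by
      simp [Real.volume_Ioo]
      linarith
    obtain ⟨τ, hτIoo, hτP⟩ : ∃ τ ∈ Ioo s t,
        (τ < t₀ → HasDerivAt μ (μ' τ) τ ∧ μ' τ ≤ -H (μ τ) / (c * μ τ)) := by
      by_contra hno
      push_neg at hno
      refine hne (measure_mono_null ?_ (ae_iff.mp hμderiv))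
      intro τ hτ
      simp only [mem_setOf_eq]
      intro hP
      obtain ⟨h1, h2⟩ := hno τ hτ
      exact absurd (hP h1) (by push_neg; exact fun hd => h2 hd)
    have hτt₀ : τ < t₀ := lt_trans hτIoo.2 hlt
    obtain ⟨hd, hb⟩ := hτP hτt₀
    have heq : μ =ᶠ[𝓝 τ] (fun _ => μ s) :=
      eventually_of_mem (isOpen_Ioo.mem_nhds hτIoo)
        (fun x hx => hconst x ⟨hx.1.le, hx.2.le⟩)
    have hd0 : HasDerivAt μ 0 τ := (hasDerivAt_const τ (μ s)).congr_of_eventuallyEq heq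
    have hμ'0 : μ' τ = 0 := hd.unique hd0
    have hpos := hμpos τ hτt₀
    have hHp := hHpos _ hpos
    have h4 : -H (μ τ) / (c * μ τ) < 0 := by
      rw [neg_div]
      exact neg_lt_zero.mpr (div_pos hHp (mul_pos hc hpos))
    rw [hμ'0] at hb
    linarith
  have hμcont : ∀ t < t₀, ContinuousAt μ t := by
    intro t hlt
    set b := (t + t₀) / 2 with hb
    have htb : t < b := by rw [hb]; linarith
    have hbt₀ : b < t₀ := by rw [hb]; linarith
    set a := t - 1 with ha
    have hat : a < t := by rw [ha]; linarith
    have hint : IntervalIntegrable μ' volume a b := hμint a b (by linarith) hbt₀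
    have hprim : ContinuousOn (fun x => μ a + ∫ τ in a..x, μ' τ) (uIcc a b) :=
      continuousOn_const.add (intervalIntegral.continuousOn_primitive_interval' hint left_mem_uIcc)
    have heq : ∀ x ∈ uIcc a b, μ x = μ a + ∫ τ in a..x, μ' τ := by
      intro x hx
      rw [uIcc_of_le (by linarith : a ≤ b)] at hx
      have := hμac a x hx.1 (lt_of_le_of_lt hx.2 hbt₀)
      linarith
    have hμcont : ContinuousOn μ (uIcc a b) := hprim.congr heq
    have : uIcc a b ∈ 𝓝 t := by
      rw [uIcc_of_le (by linarith : a ≤ b)]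
      exact Icc_mem_nhds hat htb
    exact hμcont.continuousAt this
  have hμt₂ : 0 < μ t₂ := hμpos t₂ ht₂
  set y₀ := μ t₂ with hy₀
  have hHc : ContinuousOn H (Ioi 0) := hH.continuousOn
  set φ : ℝ → ℝ := fun y => c * y / H y with hφ
  have hφc : ContinuousOn φ (Ioi (0:ℝ)) := by
    exact (continuousOn_const.mul continuousOn_id).div hHc
      (fun y hy => ne_of_gt (hHpos y hy))
  have hφpos : ∀ y ∈ Ioi (0:ℝ), 0 < φ y :=
    fun y hy => div_pos (mul_pos hc hy) (hHpos y hy)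
  set F : ℝ → ℝ := fun y => ∫ s in y₀..y, φ s with hF
  have hφint : ∀ y ∈ Ioi (0:ℝ), IntervalIntegrable φ volume y₀ y := by
    intro y hy
    apply ContinuousOn.intervalIntegrable
    apply hφc.mono
    intro x hx
    have h1 : (0:ℝ) < min y₀ y := lt_min hμt₂ hy
    have h2 : min y₀ y ≤ x := by
      rcases le_total y₀ y with h | h
      · rw [uIcc_of_le h] at hx; exact (min_le_left _ _).trans hx.1
      · rw [uIcc_of_ge h] at hx; exact (min_le_right _ _).trans hx.1
    exact lt_of_lt_of_le h1 h2
  have hFderiv : ∀ y ∈ Ioi (0:ℝ), HasDerivAt F (φ y) y := by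
    intro y hy
    exact intervalIntegral.integral_hasDerivAt_right (hφint y hy)
      (hφc.stronglyMeasurableAtFilter isOpen_Ioi y hy)
      (hφc.continuousAt (isOpen_Ioi.mem_nhds hy))
  have hFcont : ContinuousOn F (Ioi (0:ℝ)) :=
    fun y hy => ((hFderiv y hy).continuousAt).continuousWithinAt
  have hFmono : StrictMonoOn F (Ioi (0:ℝ)) := by
    apply strictMonoOn_of_deriv_pos (convex_Ioi 0) hFcont
    intro y hy
    rw [interior_Ioi] at hy
    rw [(hFderiv y hy).deriv]
    exact hφpos y hy
  have hFy₀ : F y₀ = 0 := intervalIntegral.integral_same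
  -- the validity set and the solution g
  set V : Set ℝ := {t | ∃ y, 0 < y ∧ F y = t₂ - t} with hV
  classical
  set g : ℝ → ℝ := fun t =>
    if h : ∃ y, 0 < y ∧ F y = t₂ - t then h.choose else 1 with hg
  have hgspec : ∀ t ∈ V, 0 < g t ∧ F (g t) = t₂ - t := by
    intro t htV
    have h : ∃ y, 0 < y ∧ F y = t₂ - t := htV
    have heq : g t = h.choose := by rw [hg]; simp only [dif_pos h]
    rw [heq]
    exact h.choose_spec
  have ht₂V : t₂ ∈ V := ⟨y₀, hμt₂, by rw [hFy₀]; ring⟩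
  have hgt₂ : g t₂ = y₀ := by
    obtain ⟨hpos, hFeq⟩ := hgspec t₂ ht₂V
    have : F (g t₂) = F y₀ := by rw [hFeq, hFy₀]; ring
    exact hFmono.injOn hpos hμt₂ this
  -- V is upward closed within (-∞, t₂]
  have hVup : ∀ t ∈ V, ∀ r, t ≤ r → r ≤ t₂ → r ∈ V := by
    intro t htV r htr hrt₂
    obtain ⟨hgpos, hgF⟩ := hgspec t htV
    have h1 : F y₀ ≤ t₂ - r := by rw [hFy₀]; linarith
    have h2 : t₂ - r ≤ F (g t) := by rw [hgF]; linarith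
    have hy₀g : y₀ ≤ g t := by
      by_contra hcon
      push_neg at hcon
      have := hFmono hgpos hμt₂ hcon
      linarith [hgF ▸ this]
    have hIcc : Icc y₀ (g t) ⊆ Ioi (0:ℝ) := fun x hx => lt_of_lt_of_le hμt₂ hx.1
    obtain ⟨y, hymem, hyF⟩ := intermediate_value_Icc hy₀g (hFcont.mono hIcc) ⟨h1, h2⟩
    exact ⟨y, lt_of_lt_of_le hμt₂ hymem.1, hyF⟩
  -- V is open
  have hVopen : IsOpen V := by
    rw [Metric.isOpen_iff]
    intro t htV
    obtain ⟨hgpos, hgF⟩ := hgspec t htV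
    set y := g t
    have hy2 : (0:ℝ) < y / 2 := by linarith
    have h12 : y / 2 < y := by linarith
    have hyy1 : y < y + 1 := by linarith
    have hFa : F (y/2) < F y := hFmono hy2 hgpos h12
    have hFb : F y < F (y+1) := hFmono hgpos (mem_Ioi.mpr (by linarith)) hyy1
    refine ⟨min (F y - F (y/2)) (F (y+1) - F y), by simp [hFa, hFb], ?_⟩
    intro t' ht'
    rw [Metric.mem_ball, Real.dist_eq] at ht'
    have hlow : F (y/2) ≤ t₂ - t' := by
      have := abs_lt.mp ht'
      have h1 : t' - t < F y - F (y/2) := lt_of_lt_of_le this.2 (min_le_left _ _)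
      linarith [hgF]
    have hhigh : t₂ - t' ≤ F (y+1) := by
      have := abs_lt.mp ht'
      have h1 : -(F (y+1) - F y) < t' - t := lt_of_le_of_lt (neg_le_neg (min_le_right _ _)) this.1
      linarith [hgF]
    have hIcc : Icc (y/2) (y+1) ⊆ Ioi (0:ℝ) := fun x hx => lt_of_lt_of_le hy2 hx.1
    obtain ⟨z, hzmem, hzF⟩ := intermediate_value_Icc (by linarith : y/2 ≤ y+1)
      (hFcont.mono hIcc) ⟨hlow, hhigh⟩
    exact ⟨z, lt_of_lt_of_le hy2 hzmem.1, hzF⟩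
  -- g is antitone on V
  have hganti : ∀ t ∈ V, ∀ t' ∈ V, t ≤ t' → g t' ≤ g t := by
    intro t htV t' ht'V htt'
    obtain ⟨h1, h2⟩ := hgspec t htV
    obtain ⟨h3, h4⟩ := hgspec t' ht'V
    by_contra hcon
    push_neg at hcon
    have := hFmono h1 h3 hcon
    rw [h2, h4] at this
    linarith
  -- g is continuous on V
  have hgcont : ∀ t ∈ V, ContinuousAt g t := by
    intro t htV
    obtain ⟨hgpos, hgF⟩ := hgspec t htV
    rw [ContinuousAt]
    apply tendsto_order.2
    constructor
    · intro b hb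
      set y' := max (g t / 2) ((b + g t)/2) with hy'
      have hy'pos : 0 < y' := lt_of_lt_of_le (by linarith) (le_max_left _ _)
      have hy'lt : y' < g t := max_lt (by linarith) (by linarith)
      have hby' : b < y' := lt_of_lt_of_le (by linarith) (le_max_right _ _)
      have hFy' : F y' < F (g t) := hFmono (mem_Ioi.mpr hy'pos) (mem_Ioi.mpr hgpos) hy'lt
      have hev1 : ∀ᶠ t' in 𝓝 t, t' ∈ V := hVopen.mem_nhds htV
      have hev2 : ∀ᶠ t' in 𝓝 t, F y' < t₂ - t' := by
        have hcont2 : ContinuousAt (fun t' => t₂ - t') t := by fun_prop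
        have hlt : F y' < t₂ - t := by rw [← hgF]; exact hFy'
        exact hcont2.eventually (eventually_gt_nhds hlt)
      filter_upwards [hev1, hev2] with t' ht'V ht'F
      obtain ⟨hp, hFeq⟩ := hgspec t' ht'V
      rw [← hFeq] at ht'F
      by_contra hcon
      push_neg at hcon
      have hgt'y' : g t' < y' := lt_of_le_of_lt hcon hby'
      have := hFmono (mem_Ioi.mpr hp) (mem_Ioi.mpr hy'pos) hgt'y'
      linarith
    · intro b hb
      set y' := (g t + b)/2 with hy'
      have hy'pos : 0 < y' := by rw [hy']; linarith
      have hy'gt : g t < y' := by rw [hy']; linarith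
      have hy'b : y' < b := by rw [hy']; linarith
      have hFy' : F (g t) < F y' := hFmono (mem_Ioi.mpr hgpos) (mem_Ioi.mpr hy'pos) hy'gt
      have hev1 : ∀ᶠ t' in 𝓝 t, t' ∈ V := hVopen.mem_nhds htV
      have hev2 : ∀ᶠ t' in 𝓝 t, t₂ - t' < F y' := by
        have hcont2 : ContinuousAt (fun t' => t₂ - t') t := by fun_prop
        have hlt : t₂ - t < F y' := by rw [← hgF]; exact hFy'
        exact hcont2.eventually (eventually_lt_nhds hlt)
      filter_upwards [hev1, hev2] with t' ht'V ht'F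
      obtain ⟨hp, hFeq⟩ := hgspec t' ht'V
      rw [← hFeq] at ht'F
      by_contra hcon
      push_neg at hcon
      have hgey' : y' ≤ g t' := le_trans hy'b.le hcon
      rcases eq_or_lt_of_le hgey' with heq | hlt2
      · rw [← heq] at ht'F; linarith
      · have := hFmono (mem_Ioi.mpr hy'pos) (mem_Ioi.mpr hp) hlt2
        linarith
  -- derivative of g
  have hgderiv : ∀ t ∈ V, HasDerivAt g (-(H (g t) / (c * g t))) t := by
    intro t htV
    obtain ⟨hgpos, hgF⟩ := hgspec t htV
    have hψd : HasDerivAt (fun x => t₂ - F x) (-φ (g t)) (g t) :=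
      (hFderiv (g t) hgpos).const_sub t₂
    have hφne : φ (g t) ≠ 0 := ne_of_gt (hφpos _ hgpos)
    have hfg : ∀ᶠ u in 𝓝 t, t₂ - F (g u) = u := by
      filter_upwards [hVopen.mem_nhds htV] with u huV
      rw [(hgspec u huV).2]
      ring
    have hres := HasDerivAt.of_local_left_inverse (hgcont t htV) hψd
      (neg_ne_zero.mpr hφne) hfg
    have hval : (-φ (g t))⁻¹ = -(H (g t) / (c * g t)) := by
      rw [inv_neg]
      congr 1
      rw [hφ]
      exact inv_div _ _
    rwa [hval] at hres
  -- the nonlinearity f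
  set f : ℝ → ℝ := fun y => H y / (c * y) with hf
  have hfc : ContDiffOn ℝ 1 f (Ioi 0) := by
    apply hH.div (ContDiffOn.mul contDiffOn_const contDiffOn_id)
    exact fun y hy => ne_of_gt (mul_pos hc hy)
  have hfcont : ContinuousOn f (Ioi (0:ℝ)) := hfc.continuousOn
  have hfderivcont : ContinuousOn (deriv f) (Ioi (0:ℝ)) :=
    hfc.continuousOn_deriv_of_isOpen isOpen_Ioi le_rfl
  have hgderiv' : ∀ t ∈ V, HasDerivAt g (-(f (g t))) t := hgderiv
  -- comparison on [t₁, t₂] whenever t₁ ∈ V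
  have hcomp : ∀ t₁, t₁ ≤ t₂ → t₁ ∈ V → g t₁ ≤ μ t₁ := by
    intro t₁ ht₁ ht₁V
    have hIccV : ∀ s, s ∈ Icc t₁ t₂ → s ∈ V := fun s hs => hVup t₁ ht₁V s hs.1 hs.2
    have hlt₀ : ∀ s, s ∈ Icc t₁ t₂ → s < t₀ := fun s hs => lt_of_le_of_lt hs.2 ht₂
    have hμc : ContinuousOn μ (Icc t₁ t₂) :=
      fun s hs => (hμcont s (hlt₀ s hs)).continuousWithinAt
    have ht₁mem : t₁ ∈ Icc t₁ t₂ := ⟨le_refl _, ht₁⟩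
    have ht₂mem : t₂ ∈ Icc t₁ t₂ := ⟨ht₁, le_refl _⟩
    obtain ⟨pmin, hpminmem, hpmin⟩ := isCompact_Icc.exists_isMinOn ⟨t₁, ht₁mem⟩ hμc
    obtain ⟨pmax, hpmaxmem, hpmax⟩ := isCompact_Icc.exists_isMaxOn ⟨t₁, ht₁mem⟩ hμc
    set m := min y₀ (μ pmin) with hm
    set M := max (g t₁) (μ pmax) with hM
    have hmpos : 0 < m := lt_min hμt₂ (hμpos pmin (hlt₀ pmin hpminmem))
    have hKsub : Icc m M ⊆ Ioi (0:ℝ) := fun x hx => lt_of_lt_of_le hmpos hx.1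
    obtain ⟨C, hC⟩ := isCompact_Icc.exists_bound_of_continuousOn (hfderivcont.mono hKsub)
    set L := max C 0 with hL
    have hLnonneg : (0:ℝ) ≤ L := le_max_right _ _
    have hlip : ∀ x ∈ Icc m M, ∀ y ∈ Icc m M, |f y - f x| ≤ L * |y - x| := by
      intro x hx y hy
      have hdiff : ∀ z ∈ Icc m M, DifferentiableAt ℝ f z := fun z hz =>
        (hfc.contDiffAt (isOpen_Ioi.mem_nhds (hKsub hz))).differentiableAt one_ne_zero
      have hbound : ∀ z ∈ Icc m M, ‖deriv f z‖ ≤ L :=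
        fun z hz => le_trans (hC z hz) (le_max_left _ _)
      have := (convex_Icc m M).norm_image_sub_le_of_norm_deriv_le hdiff hbound hx hy
      simpa [Real.norm_eq_abs] using this
    have hgmem : ∀ s ∈ Icc t₁ t₂, g s ∈ Icc m M := by
      intro s hs
      have hsV := hIccV s hs
      constructor
      · calc m ≤ y₀ := min_le_left _ _
          _ = g t₂ := hgt₂.symm
          _ ≤ g s := hganti s hsV t₂ ht₂V hs.2
      · calc g s ≤ g t₁ := hganti t₁ ht₁V s hsV hs.1
          _ ≤ M := le_max_left _ _
    have hμmem : ∀ s ∈ Icc t₁ t₂, μ s ∈ Icc m M := by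
      intro s hs
      exact ⟨le_trans (min_le_right _ _) (hpmin hs), le_trans (hpmax hs) (le_max_right _ _)⟩
    set h : ℝ → ℝ := fun s => g s - μ s with hh
    have hgcontOn : ContinuousOn g (Icc t₁ t₂) :=
      fun s hs => (hgcont s (hIccV s hs)).continuousWithinAt
    have hhcont : ContinuousOn h (Icc t₁ t₂) := hgcontOn.sub hμc
    have hht₂ : h t₂ ≤ 0 := by rw [hh]; simp only [hgt₂, hy₀]; simp
    have hkey : ∀ s u, t₁ ≤ s → s ≤ u → u ≤ t₂ → (∀ τ ∈ Icc s u, 0 ≤ h τ) → h u ≤ 0 →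
        h s ≤ ∫ τ in s..u, L * h τ := by
      intro s u hts hsu hut hposh hu0
      have hsubIcc : Icc s u ⊆ Icc t₁ t₂ := Icc_subset_Icc hts hut
      have hfgcont : ContinuousOn (fun τ => f (g τ)) (Icc s u) := by
        apply hfcont.comp (hgcontOn.mono hsubIcc)
        intro τ hτ
        exact (hgspec τ (hIccV τ (hsubIcc hτ))).1
      have hgint2 : IntervalIntegrable (fun τ => f (g τ)) volume s u := by
        apply ContinuousOn.intervalIntegrable
        rw [uIcc_of_le hsu]
        exact hfgcont
      have hgFTC : g u - g s = ∫ τ in s..u, -(f (g τ)) := by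
        refine (intervalIntegral.integral_eq_sub_of_hasDerivAt ?_ ?_).symm
        · intro τ hτ
          rw [uIcc_of_le hsu] at hτ
          exact hgderiv' τ (hIccV τ (hsubIcc hτ))
        · apply ContinuousOn.intervalIntegrable
          rw [uIcc_of_le hsu]
          exact hfgcont.neg
      have hut₀ : u < t₀ := lt_of_le_of_lt hut ht₂
      have hμint' : IntervalIntegrable μ' volume s u := hμint s u hsu hut₀
      have hμFTC : μ u - μ s = ∫ τ in s..u, μ' τ := hμac s u hsu hut₀
      have hI : ∫ τ in s..u, (μ' τ + f (g τ))
          = (∫ τ in s..u, μ' τ) - (∫ τ in s..u, -(f (g τ))) := by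
        rw [intervalIntegral.integral_add hμint' hgint2]
        rw [intervalIntegral.integral_neg]
        ring
      have step1 : h s = h u + ∫ τ in s..u, (μ' τ + f (g τ)) := by
        rw [hI, hh]
        simp only
        linarith [hgFTC, hμFTC]
      have hLh_int : IntervalIntegrable (fun τ => L * h τ) volume s u := by
        apply ContinuousOn.intervalIntegrable
        rw [uIcc_of_le hsu]
        exact continuousOn_const.mul (hhcont.mono hsubIcc)
      have hmono : (∫ τ in s..u, (μ' τ + f (g τ))) ≤ ∫ τ in s..u, L * h τ := by
        apply intervalIntegral.integral_mono_ae_restrict hsu (hμint'.add hgint2) hLh_int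
        have hae : ∀ᵐ τ : ℝ, τ ∈ Icc s u → μ' τ + f (g τ) ≤ L * h τ := by
          filter_upwards [hμderiv] with τ hτ hmem
          have hτt₀ : τ < t₀ := lt_of_le_of_lt hmem.2 hut₀
          have hμb := (hτ hτt₀).2
          have hμposτ := hμpos τ hτt₀
          have hμb' : μ' τ ≤ -(f (μ τ)) := by
            rw [hf]
            simp only
            rw [← neg_div]
            exact hμb
          have hmem' : τ ∈ Icc t₁ t₂ := hsubIcc hmem
          have h5 := hlip (μ τ) (hμmem τ hmem') (g τ) (hgmem τ hmem')
          have h6 : 0 ≤ h τ := hposh τ hmem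
          have h7 : |g τ - μ τ| = h τ := abs_of_nonneg h6
          calc μ' τ + f (g τ) ≤ f (g τ) - f (μ τ) := by linarith
            _ ≤ |f (g τ) - f (μ τ)| := le_abs_self _
            _ ≤ L * |g τ - μ τ| := h5
            _ = L * h τ := by rw [h7]
        exact (ae_restrict_iff' measurableSet_Icc).2 hae
      linarith [step1, hmono]
    have := gronwall_aux L t₁ t₂ hLnonneg ht₁ h hhcont hht₂ hkey t₁ ht₁mem
    rw [hh] at this
    simp only at this
    linarith
  -- every t ≤ t₂ is in V
  have hall : ∀ t ≤ t₂, t ∈ V := by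
    by_contra hex
    push_neg at hex
    obtain ⟨T₀, hT₀le, hT₀V⟩ := hex
    set S : Set ℝ := {t | t ≤ t₂ ∧ t ∉ V} with hS
    have hSne : S.Nonempty := ⟨T₀, hT₀le, hT₀V⟩
    have hSbdd : BddAbove S := ⟨t₂, fun x hx => hx.1⟩
    set T := sSup S with hT
    have hTle : T ≤ t₂ := csSup_le hSne (fun x hx => hx.1)
    have hTnotV : T ∉ V := by
      intro hTV
      rw [Metric.isOpen_iff] at hVopen
      obtain ⟨ε, hεpos, hball⟩ := hVopen T hTV
      have hub : ∀ x ∈ S, x ≤ T - ε := by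
        intro x hx
        by_contra hcon
        push_neg at hcon
        have hxT : x ≤ T := le_csSup hSbdd hx
        have : x ∈ Metric.ball T ε := by
          rw [Metric.mem_ball, Real.dist_eq, abs_lt]
          constructor <;> linarith
        exact hx.2 (hball this)
      have := csSup_le hSne hub
      linarith
    have hTlt : T < t₂ := lt_of_le_of_ne hTle (fun heq => hTnotV (heq ▸ ht₂V))
    have hIocV : ∀ t, T < t → t ≤ t₂ → t ∈ V := by
      intro t hTt htt₂
      by_contra hcon
      have : t ∈ S := ⟨htt₂, hcon⟩
      exact absurd (le_csSup hSbdd this) (not_le.mpr hTt)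
    have hTt₀ : T < t₀ := lt_of_lt_of_le hTlt ht₂.le |>.trans_le (le_refl _)
    have hμT : 0 < μ T := hμpos T hTt₀
    have hy₀T : y₀ ≤ μ T := hμanti T t₂ hTle ht₂
    have hFμT : t₂ - T ≤ F (μ T) := by
      -- for every t ∈ (T, t₂], t₂ - t ≤ F (μ T); pass to the limit
      have hptwise : ∀ t, T < t → t ≤ t₂ → t₂ - t ≤ F (μ T) := by
        intro t hTt htt₂
        have htV := hIocV t hTt htt₂
        obtain ⟨hgpos, hgF⟩ := hgspec t htV
        have hgμ : g t ≤ μ t := hcomp t htt₂ htV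
        have hμtT : μ t ≤ μ T := hμanti T t hTt.le (lt_of_le_of_lt htt₂ ht₂)
        have hgμT : g t ≤ μ T := le_trans hgμ hμtT
        rw [← hgF]
        rcases eq_or_lt_of_le hgμT with heq | hlt2
        · rw [heq]
        · exact (hFmono (mem_Ioi.mpr hgpos) (mem_Ioi.mpr hμT) hlt2).le
      by_contra hcon
      push_neg at hcon
      set t' := max T (t₂ - F (μ T)) with ht'
      have h1 : T < t₂ - F (μ T) ∨ T ≥ t₂ - F (μ T) := lt_or_ge _ _
      -- pick t strictly between T and min t₂ (t₂ - F (μ T)) ... simpler: use a midpoint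
      set ε := min (t₂ - T) (t₂ - F (μ T) - T) with hε
      have hεpos : 0 < ε := lt_min (by linarith) (by linarith)
      have h2 := hptwise (T + ε/2) (by linarith) (by
        have : ε ≤ t₂ - T := min_le_left _ _
        linarith)
      have : ε ≤ t₂ - F (μ T) - T := min_le_right _ _
      linarith
    have hT₂T : F y₀ ≤ t₂ - T := by rw [hFy₀]; linarith
    have hIcc2 : Icc y₀ (μ T) ⊆ Ioi (0:ℝ) := fun x hx => lt_of_lt_of_le hμt₂ hx.1
    obtain ⟨y, hymem, hyF⟩ := intermediate_value_Icc hy₀T (hFcont.mono hIcc2)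
      ⟨hT₂T, hFμT⟩
    exact hTnotV ⟨y, lt_of_lt_of_le hμt₂ hymem.1, hyF⟩
  -- assemble
  refine ⟨g, ?_, ?_⟩
  · rw [hgt₂, hy₀]
  · intro t htle
    have htV := hall t htle
    constructor
    · have := hgderiv t htV
      rwa [← neg_div] at this
    · exact hcomp t htle htV
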